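/- arXiv:1202.1376 — 2 statements merged into one kernel-verified Lean document; each statement's English description precedes it below -/
import Mathlib

section
/- For every n ≥ 1 and every path ξ = (ξ_n,…,ξ_1) ∈ Ω_n, the squared norm of the weight satisfies ‖w(ξ)‖² = ⟨𝟙, P̃_{ξ_n}···P̃_{ξ_2} φ_{ξ_1}⟩, where 𝟙 = (1,1)ᵀ. In particular, ‖w(ξ)‖² equals the probability that the (p₀,p)-correlated random walker with parameters p = |a|² and p₀ = |cα+dβ|² walks along the path ξ. -/
open Matrix Filter
open scoped BigOperators Classical

noncomputable section

/-- Index in `Fin 2` of a direction: `false` ↔ `-1` (index `0`), `true` ↔ `1` (index `1`). -/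
def bidx (b : Bool) : Fin 2 := if b then 1 else 0

/-- The standard basis vector `e_j`, `j ∈ {-1,1}`, of `ℂ²`. -/
def eVec (b : Bool) : Fin 2 → ℂ := fun i => if i = bidx b then 1 else 0

/-- The projection `e_j e_j†`. -/
def projC (b : Bool) : Matrix (Fin 2) (Fin 2) ℂ :=
  Matrix.single (bidx b) (bidx b) 1

/-- `P_j = e_j e_j† U`. -/
def pMat (U : Matrix (Fin 2) (Fin 2) ℂ) (b : Bool) : Matrix (Fin 2) (Fin 2) ℂ :=
  projC b * U

/-- The weight of a path `ξ = (ξ_n, …, ξ_1)` (here `ξ i` is step `i+1`):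
`w(ξ) = P_{ξ_n} ⋯ P_{ξ_1} φ₀`. -/
def weight (U : Matrix (Fin 2) (Fin 2) ℂ) (φ₀ : Fin 2 → ℂ) {n : ℕ} (ξ : Fin n → Bool) :
    Fin 2 → ℂ :=
  ((List.ofFn fun i => pMat U (ξ i)).reverse.prod).mulVec φ₀

/-- The complex inner product `⟨v, w⟩`, conjugate-linear in the first slot. -/
def cdot (v w : Fin 2 → ℂ) : ℂ := ∑ i, (starRingEnd ℂ) (v i) * w i

/-- The decoherence matrix restricted to a set `A` of pairs of paths. -/
def decMat (U : Matrix (Fin 2) (Fin 2) ℂ) (φ₀ : Fin 2 → ℂ) {n : ℕ}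
    (A : Set ((Fin n → Bool) × (Fin n → Bool))) :
    Matrix (Fin n → Bool) (Fin n → Bool) ℂ :=
  Matrix.of fun ξ η =>
    if (ξ, η) ∈ A then cdot (weight U φ₀ ξ) (weight U φ₀ η) else 0

/-- `ξ_1 + ⋯ + ξ_n ∈ ℤ`, each step being `±1`. -/
def pathSum {n : ℕ} (ξ : Fin n → Bool) : ℤ := ∑ i, (if ξ i then 1 else -1)

/-- `A₀^{(n)}`: pairs of paths with the same final direction (paths have length `n+1`). -/
def A0 (n : ℕ) : Set ((Fin (n+1) → Bool) × (Fin (n+1) → Bool)) :=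
  {x | x.1 (Fin.last n) = x.2 (Fin.last n)}

/-- `A_P^{(n)}`: pairs of paths with the same final direction and the same endpoint. -/
def AP (n : ℕ) : Set ((Fin (n+1) → Bool) × (Fin (n+1) → Bool)) :=
  {x | x.1 (Fin.last n) = x.2 (Fin.last n) ∧ pathSum x.1 = pathSum x.2}

/-- `A₁^{(n)}`: the diagonal pairs. -/
def A1 (n : ℕ) : Set ((Fin (n+1) → Bool) × (Fin (n+1) → Bool)) :=
  {x | x.1 = x.2}

/-- The von Neumann entropy `S(D) = −Σᵢ λᵢ log₂ λᵢ`, summing over the eigenvalues with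
multiplicity (the roots of the characteristic polynomial; they are real for a PSD Hermitian
matrix), with the convention `0 · log₂ 0 = 0`. -/
def vnEntropy {I : Type*} [Fintype I] [DecidableEq I] (D : Matrix I I ℂ) : ℝ :=
  -((D.charpoly.roots).map fun lam => lam.re * Real.logb 2 lam.re).sum

/-- The real projection `e_j e_j†`. -/
def projR (b : Bool) : Matrix (Fin 2) (Fin 2) ℝ :=
  Matrix.single (bidx b) (bidx b) 1

/-- The stochastic matrix `M = [[p, q], [q, p]]` of the correlated random walk, `q = 1 − p`. -/
def rwM (p : ℝ) : Matrix (Fin 2) (Fin 2) ℝ := !![p, 1-p; 1-p, p]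

/-- The initial vector `φ = (q₀, p₀)ᵀ` of the correlated random walk, `q₀ = 1 − p₀`. -/
def rwφ (p₀ : ℝ) : Fin 2 → ℝ := ![1 - p₀, p₀]

/-- `P̃_{ξ_n} ⋯ P̃_{ξ_2} φ_{ξ_1}`, where `P̃_j = e_j e_j† M` and `φ_j = e_j e_j† φ`. -/
def rwVec (p p₀ : ℝ) : {n : ℕ} → (Fin n → Bool) → (Fin 2 → ℝ)
  | 0, _ => rwφ p₀
  | n + 1, ξ =>
      ((List.ofFn fun i : Fin n => projR (ξ i.succ) * rwM p).reverse.prod).mulVec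
        ((projR (ξ 0)).mulVec (rwφ p₀))

/-- `p_L^{(n)}(j)`: the probability that the `(p₀,p)`-correlated random walk is at `j`
at time `n`, having arrived from the left. -/
def pL (p p₀ : ℝ) (n : ℕ) (j : ℤ) : ℝ :=
  ∑ ξ ∈ Finset.univ.filter (fun ξ : Fin n → Bool => pathSum ξ = j), rwVec p p₀ ξ 0

/-- `p_R^{(n)}(j)`: the probability that the `(p₀,p)`-correlated random walk is at `j`
at time `n`, having arrived from the right. -/
def pR (p p₀ : ℝ) (n : ℕ) (j : ℤ) : ℝ :=
  ∑ ξ ∈ Finset.univ.filter (fun ξ : Fin n → Bool => pathSum ξ = j), rwVec p p₀ ξ 1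

lemma projC_mulVec (b : Bool) (v : Fin 2 → ℂ) (i : Fin 2) :
    ((projC b).mulVec v) i = if i = bidx b then v (bidx b) else 0 := by
  fin_cases b <;> fin_cases i <;>
    simp [projC, bidx, Matrix.mulVec, Matrix.single, dotProduct, Fin.sum_univ_two,
      Matrix.of_apply]

lemma projR_mulVec (b : Bool) (v : Fin 2 → ℝ) (i : Fin 2) :
    ((projR b).mulVec v) i = if i = bidx b then v (bidx b) else 0 := by
  fin_cases b <;> fin_cases i <;>
    simp [projR, bidx, Matrix.mulVec, Matrix.single, dotProduct, Fin.sum_univ_two]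

lemma weight_zero (U : Matrix (Fin 2) (Fin 2) ℂ) (φ₀ : Fin 2 → ℂ) (ξ : Fin 1 → Bool) :
    weight U φ₀ ξ = (projC (ξ 0)).mulVec (U.mulVec φ₀) := by
  simp only [weight, List.ofFn_succ, List.ofFn_zero, List.reverse_cons, List.reverse_nil,
    List.nil_append, List.prod_cons, List.prod_nil, mul_one, pMat, Matrix.mulVec_mulVec]

lemma weight_succ (U : Matrix (Fin 2) (Fin 2) ℂ) (φ₀ : Fin 2 → ℂ) {n : ℕ}
    (ξ : Fin (n+2) → Bool) :
    weight U φ₀ ξ =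
      (projC (ξ (Fin.last (n+1)))).mulVec
        (U.mulVec (weight U φ₀ (fun i => ξ i.castSucc))) := by
  simp only [weight, List.ofFn_succ', List.concat_eq_append, List.reverse_append,
    List.reverse_cons, List.reverse_nil, List.nil_append, List.singleton_append,
    List.prod_cons, pMat, Matrix.mulVec_mulVec, Matrix.mul_assoc]

lemma rwVec_def (p p₀ : ℝ) {n : ℕ} (ξ : Fin (n+1) → Bool) :
    rwVec p p₀ ξ = ((List.ofFn fun i : Fin n => projR (ξ i.succ) * rwM p).reverse.prod).mulVec
        ((projR (ξ 0)).mulVec (rwφ p₀)) := rfl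

lemma rwVec_succ (p p₀ : ℝ) {n : ℕ} (ξ : Fin (n+2) → Bool) :
    rwVec p p₀ ξ =
      (projR (ξ (Fin.last (n+1)))).mulVec
        ((rwM p).mulVec (rwVec p p₀ (fun i => ξ i.castSucc))) := by
  rw [rwVec_def, rwVec_def]
  rw [List.ofFn_succ']
  simp only [List.concat_eq_append, List.reverse_append, List.reverse_cons, List.reverse_nil,
    List.nil_append, List.singleton_append, List.prod_cons, Fin.succ_last, Fin.succ_castSucc,
    Fin.castSucc_zero, Matrix.mulVec_mulVec, Matrix.mul_assoc]

lemma key (U : Matrix (Fin 2) (Fin 2) ℂ) (φ₀ : Fin 2 → ℂ) (p p₀ : ℝ)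
    (hM : ∀ j k : Fin 2, ‖U j k‖ ^ 2 = rwM p j k)
    (hφ : ∀ j : Fin 2, ‖(U.mulVec φ₀) j‖ ^ 2 = rwφ p₀ j) :
    ∀ n (ξ : Fin (n+1) → Bool) (i : Fin 2),
      (‖weight U φ₀ ξ i‖ ^ 2 = rwVec p p₀ ξ i) ∧
      (i ≠ bidx (ξ (Fin.last n)) → weight U φ₀ ξ i = 0) := by
  intro n
  induction n with
  | zero =>
      intro ξ i
      rw [weight_zero]
      have hr : rwVec p p₀ ξ = (projR (ξ 0)).mulVec (rwφ p₀) := by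
        rw [rwVec_def]; simp
      rw [hr, projC_mulVec, projR_mulVec]
      have h0 : (0 : Fin 1) = Fin.last 0 := rfl
      constructor
      · by_cases h : i = bidx (ξ 0)
        · rw [if_pos h, if_pos h]; exact hφ _
        · simp [h]
      · intro hi
        rw [← h0] at hi
        simp [hi]
  | succ n ih =>
      intro ξ i
      set ξ' : Fin (n+1) → Bool := fun i => ξ i.castSucc with hξ'
      rw [weight_succ, rwVec_succ]
      set v := weight U φ₀ ξ' with hv
      set u := rwVec p p₀ ξ' with hu
      set b := ξ (Fin.last (n+1)) with hb
      rw [projC_mulVec, projR_mulVec]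
      set k := bidx (ξ' (Fin.last n)) with hk
      clear_value k
      have hsupp : ∀ j : Fin 2, j ≠ k → v j = 0 := by
        intro j hj; rw [hk] at hj; exact (ih ξ' j).2 hj
      have habs : ∀ j : Fin 2, ‖v j‖ ^ 2 = u j := fun j => (ih ξ' j).1
      have husupp : ∀ j : Fin 2, j ≠ k → u j = 0 := by
        intro j hj; rw [← habs j, hsupp j hj]; simp
      constructor
      · by_cases h : i = bidx b
        · rw [h, if_pos rfl, if_pos rfl]
          have hUv : (U.mulVec v) (bidx b) = U (bidx b) k * v k := by
            have : ∀ j : Fin 2, U (bidx b) j * v j = if j = k then U (bidx b) k * v k else 0 := by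
              intro j
              by_cases hj : j = k
              · simp [hj]
              · simp [hj, hsupp j hj]
            have e : (U.mulVec v) (bidx b) = ∑ j, U (bidx b) j * v j := rfl
            rw [e, Finset.sum_congr rfl (fun j _ => this j),
              Finset.sum_ite_eq' Finset.univ k (fun _ => U (bidx b) k * v k)]
            simp
          have hMu : ((rwM p).mulVec u) (bidx b) = rwM p (bidx b) k * u k := by
            have : ∀ j : Fin 2, rwM p (bidx b) j * u j
                = if j = k then rwM p (bidx b) k * u k else 0 := by
              intro j
              by_cases hj : j = k
              · simp [hj]
              · simp [hj, husupp j hj]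
            have e : ((rwM p).mulVec u) (bidx b) = ∑ j, rwM p (bidx b) j * u j := rfl
            rw [e, Finset.sum_congr rfl (fun j _ => this j),
              Finset.sum_ite_eq' Finset.univ k (fun _ => rwM p (bidx b) k * u k)]
            simp
          rw [hUv, hMu, norm_mul, mul_pow, hM, habs]
        · simp [h]
      · intro hi
        simp [hi]

/-- `‖w(ξ)‖² = ⟨𝟙, P̃_{ξ_n} ⋯ P̃_{ξ_2} φ_{ξ_1}⟩`, the probability that the
`(p₀,p)`-correlated random walk with `p = |a|²`, `p₀ = |cα+dβ|²` walks along `ξ`. -/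
theorem weight_norm_sq_eq_correlated_rw_prob
    (a b c d α β : ℂ)
    (hU : !![a, b; c, d] ∈ Matrix.unitaryGroup (Fin 2) ℂ)
    (habcd : a * b * c * d ≠ 0)
    (hφ : ‖α‖ ^ 2 + ‖β‖ ^ 2 = 1)
    (n : ℕ) (ξ : Fin (n+1) → Bool) :
    ∑ i, ‖weight !![a, b; c, d] ![α, β] ξ i‖ ^ 2 =
      (fun _ => (1 : ℝ)) ⬝ᵥ
        rwVec (‖a‖ ^ 2) (‖c * α + d * β‖ ^ 2) ξ := by

  set U : Matrix (Fin 2) (Fin 2) ℂ := !![a, b; c, d] with hUdef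
  have h1 : U * star U = 1 := Matrix.mem_unitaryGroup_iff.mp hU
  have h2 : star U * U = 1 := Matrix.mem_unitaryGroup_iff'.mp hU
  have R1 : a * (starRingEnd ℂ) a + b * (starRingEnd ℂ) b = 1 := by
    have := congrFun (congrFun h1 0) 0
    simpa [hUdef, Matrix.mul_apply, Fin.sum_univ_two, Matrix.one_apply] using this
  have C1 : (starRingEnd ℂ) a * a + (starRingEnd ℂ) c * c = 1 := by
    have := congrFun (congrFun h2 0) 0
    simpa [hUdef, Matrix.mul_apply, Fin.sum_univ_two, Matrix.one_apply] using this
  have C2 : (starRingEnd ℂ) b * b + (starRingEnd ℂ) d * d = 1 := by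
    have := congrFun (congrFun h2 1) 1
    simpa [hUdef, Matrix.mul_apply, Fin.sum_univ_two, Matrix.one_apply] using this
  have C3 : (starRingEnd ℂ) a * b + (starRingEnd ℂ) c * d = 0 := by
    have := congrFun (congrFun h2 0) 1
    simpa [hUdef, Matrix.mul_apply, Fin.sum_univ_two, Matrix.one_apply] using this
  have C3' : (starRingEnd ℂ) b * a + (starRingEnd ℂ) d * c = 0 := by
    have := congrFun (congrFun h2 1) 0
    simpa [hUdef, Matrix.mul_apply, Fin.sum_univ_two, Matrix.one_apply] using this
  -- real versions
  have nR1 : Complex.normSq a + Complex.normSq b = 1 := by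
    have : ((Complex.normSq a : ℂ) + Complex.normSq b) = 1 := by
      rw [← Complex.mul_conj, ← Complex.mul_conj]; exact R1
    exact_mod_cast this
  have nC1 : Complex.normSq a + Complex.normSq c = 1 := by
    have : ((Complex.normSq a : ℂ) + Complex.normSq c) = 1 := by
      rw [Complex.normSq_eq_conj_mul_self, Complex.normSq_eq_conj_mul_self]; exact C1
    exact_mod_cast this
  have nC2 : Complex.normSq b + Complex.normSq d = 1 := by
    have : ((Complex.normSq b : ℂ) + Complex.normSq d) = 1 := by
      rw [Complex.normSq_eq_conj_mul_self, Complex.normSq_eq_conj_mul_self]; exact C2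
    exact_mod_cast this
  set p := ‖a‖ ^ 2 with hp
  set p₀ := ‖c * α + d * β‖ ^ 2 with hp₀
  have hM : ∀ j k : Fin 2, ‖U j k‖ ^ 2 = rwM p j k := by
    intro j k
    fin_cases j <;> fin_cases k <;>
      simp [hUdef, rwM, hp, Complex.sq_norm] <;> linarith [nR1, nC1, nC2]
  have hαβ : Complex.normSq α + Complex.normSq β = 1 := by
    simpa [Complex.sq_norm] using hφ
  have hw0 : (U.mulVec ![α, β]) 0 = a * α + b * β := by
    simp [hUdef, Matrix.mulVec, dotProduct, Fin.sum_univ_two]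
  have hw1 : (U.mulVec ![α, β]) 1 = c * α + d * β := by
    simp [hUdef, Matrix.mulVec, dotProduct, Fin.sum_univ_two]
  have hnorm : Complex.normSq (a * α + b * β) + Complex.normSq (c * α + d * β) = 1 := by
    have hc : ((Complex.normSq (a * α + b * β) : ℂ) + Complex.normSq (c * α + d * β)) = 1 := by
      rw [← Complex.mul_conj, ← Complex.mul_conj]
      simp only [map_add, _root_.map_mul]
      have hαβ' : α * (starRingEnd ℂ) α + β * (starRingEnd ℂ) β = 1 := by
        rw [Complex.mul_conj, Complex.mul_conj]; exact_mod_cast hαβ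
      linear_combination (α * (starRingEnd ℂ) α) * C1 + (β * (starRingEnd ℂ) β) * C2 +
        ((starRingEnd ℂ) α * β) * C3 + (α * (starRingEnd ℂ) β) * C3' + hαβ'
    exact_mod_cast hc
  have hφv : ∀ j : Fin 2, ‖(U.mulVec ![α, β]) j‖ ^ 2 = rwφ p₀ j := by
    intro j
    fin_cases j
    · show ‖(U.mulVec ![α, β]) 0‖ ^ 2 = rwφ p₀ 0
      rw [hw0]
      have : rwφ p₀ 0 = 1 - p₀ := rfl
      rw [this, Complex.sq_norm, hp₀, Complex.sq_norm]
      linarith [hnorm]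
    · show ‖(U.mulVec ![α, β]) 1‖ ^ 2 = rwφ p₀ 1
      rw [hw1]
      rfl
  have hkey := key U ![α, β] p p₀ hM hφv n ξ
  rw [Fin.sum_univ_two, (hkey 0).1, (hkey 1).1]
  simp [dotProduct, Fin.sum_univ_two]
end
end

section
/- For every n ≥ 1, the von Neumann entropy of the decoherence matrix restricted to A₀^{(n)} satisfies S_{A₀^{(n)}} = −(ρ_L^{(n)} log₂ ρ_L^{(n)} + ρ_R^{(n)} log₂ ρ_R^{(n)}), where ρ_L^{(n)} = (1 + (p−q)^{n−1}(p₀−q₀))/2 and ρ_R^{(n)} = (1 − (p−q)^{n−1}(p₀−q₀))/2. -/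
open Matrix Filter
open scoped BigOperators Classical

noncomputable section

section CharpolyAux
open Polynomial
lemma my_eval_charpoly {m : Type*} [Fintype m] [DecidableEq m]
    (M : Matrix m m ℂ) (x : ℂ) :
    (M.charpoly).eval x = (Matrix.diagonal (fun _ : m => x) - M).det := by
  rw [Matrix.charpoly, ← Polynomial.coe_evalRingHom, RingHom.map_det]
  congr 1
  ext i j
  by_cases h : i = j <;>
    simp [h, Matrix.charmatrix_apply, Matrix.map_apply, Matrix.diagonal_apply]

lemma my_charpoly_rect {m : Type*} [Fintype m] [DecidableEq m]
    (B : Matrix m (Fin 2) ℂ) (C : Matrix (Fin 2) m ℂ) (h : 2 ≤ Fintype.card m) :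
    (B * C).charpoly = X ^ (Fintype.card m - 2) * (C * B).charpoly := by
  apply Polynomial.eq_of_infinite_eval_eq
  have hinf : ({x : ℂ | x ≠ 0}).Infinite := by
    have : ({x : ℂ | x ≠ 0}) = (Set.univ \ {0}) := by ext z; simp
    rw [this]
    exact Set.infinite_univ.diff (Set.finite_singleton 0)
  apply hinf.mono
  intro x hx
  simp only [Set.mem_setOf_eq]
  have hx : x ≠ 0 := hx
  rw [my_eval_charpoly, eval_mul, my_eval_charpoly, eval_pow, eval_X]
  have key0 : ∀ {k : Type} [Fintype k] [DecidableEq k] (M : Matrix k k ℂ),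
      (Matrix.diagonal (fun _ : k => x) - M).det =
        x ^ (Fintype.card k) * (1 - x⁻¹ • M).det := by
    intro k _ _ M
    have : Matrix.diagonal (fun _ : k => x) - M = x • (1 - x⁻¹ • M) := by
      rw [smul_sub, smul_smul, mul_inv_cancel₀ hx, one_smul, Matrix.smul_one_eq_diagonal]
    rw [this, Matrix.det_smul]
  have key : (Matrix.diagonal (fun _ : m => x) - B * C).det =
      x ^ (Fintype.card m) * (1 - x⁻¹ • (C * B)).det := by
    have h1 : Matrix.diagonal (fun _ : m => x) - B * C
        = x • (1 + (-(x⁻¹ • B)) * C) := by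
      rw [Matrix.neg_mul, Matrix.smul_mul, smul_add, smul_neg, smul_smul,
        mul_inv_cancel₀ hx, one_smul, Matrix.smul_one_eq_diagonal, ← sub_eq_add_neg]
    rw [h1, Matrix.det_smul, Matrix.det_one_add_mul_comm]
    congr 2
    rw [Matrix.mul_neg, Matrix.mul_smul, ← sub_eq_add_neg]
  rw [key, key0 (C * B)]
  rw [← mul_assoc, ← pow_add, Fintype.card_fin, Nat.sub_add_cancel h]

lemma pMat_mulVec (U : Matrix (Fin 2) (Fin 2) ℂ) (b : Bool) (v : Fin 2 → ℂ) (i : Fin 2) :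
    (pMat U b).mulVec v i = if i = bidx b then U.mulVec v i else 0 := by
  have : (pMat U b).mulVec v i = ∑ k, pMat U b i k * v k := rfl
  rw [this]
  have hp : ∀ k, pMat U b i k = if i = bidx b then U i k else 0 := by
    intro k
    simp only [pMat, projC, Matrix.mul_apply, Matrix.single, Matrix.of_apply]
    rw [Finset.sum_eq_single (bidx b)] <;> simp +contextual [eq_comm]
  simp only [hp]
  split <;> simp [Matrix.mulVec, dotProduct]

lemma weight_snoc (U : Matrix (Fin 2) (Fin 2) ℂ) (φ₀ : Fin 2 → ℂ) {n : ℕ}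
    (ξ : Fin n → Bool) (b : Bool) :
    weight U φ₀ (Fin.snoc ξ b) = (pMat U b).mulVec (weight U φ₀ ξ) := by
  unfold weight
  rw [List.ofFn_succ']
  simp only [Fin.snoc_castSucc, Fin.snoc_last, List.concat_eq_append, List.reverse_append,
    List.reverse_cons, List.reverse_nil, List.nil_append, List.singleton_append,
    List.prod_cons, Matrix.mulVec_mulVec]

lemma weight_apply_of_ne (U : Matrix (Fin 2) (Fin 2) ℂ) (φ₀ : Fin 2 → ℂ) {n : ℕ}
    (ξ : Fin (n+1) → Bool) (i : Fin 2) (h : i ≠ bidx (ξ (Fin.last n))) :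
    weight U φ₀ ξ i = 0 := by
  rw [← Fin.snoc_init_self ξ, weight_snoc, pMat_mulVec, if_neg]
  simpa using h

def wsum (U : Matrix (Fin 2) (Fin 2) ℂ) (φ₀ : Fin 2 → ℂ) (n : ℕ) (i : Fin 2) : ℝ :=
  ∑ ξ : Fin n → Bool, Complex.normSq (weight U φ₀ ξ i)

lemma normSq_weight_snoc (U : Matrix (Fin 2) (Fin 2) ℂ) (φ₀ : Fin 2 → ℂ) {n : ℕ}
    (ξ : Fin (n+1) → Bool) (b : Bool) (i : Fin 2) :
    Complex.normSq (weight U φ₀ (Fin.snoc ξ b) i) =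
      (if i = bidx b then 1 else 0) *
        (Complex.normSq (U i 0) * Complex.normSq (weight U φ₀ ξ 0) +
          Complex.normSq (U i 1) * Complex.normSq (weight U φ₀ ξ 1)) := by
  rw [weight_snoc, pMat_mulVec]
  split
  · rw [one_mul]
    have hm : U.mulVec (weight U φ₀ ξ) i
        = U i 0 * weight U φ₀ ξ 0 + U i 1 * weight U φ₀ ξ 1 := by
      simp [Matrix.mulVec, dotProduct, Fin.sum_univ_two]
    rw [hm]
    have h0 : weight U φ₀ ξ 0 = 0 ∨ weight U φ₀ ξ 1 = 0 := by
      cases hlast : ξ (Fin.last n)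
      · right
        apply weight_apply_of_ne
        simp [hlast, bidx]
      · left
        apply weight_apply_of_ne
        simp [hlast, bidx]
    rcases h0 with h | h <;> simp [h, Complex.normSq_mul]
  · simp

lemma wsum_succ (U : Matrix (Fin 2) (Fin 2) ℂ) (φ₀ : Fin 2 → ℂ) (n : ℕ) (i : Fin 2) :
    wsum U φ₀ (n+2) i =
      Complex.normSq (U i 0) * wsum U φ₀ (n+1) 0 +
        Complex.normSq (U i 1) * wsum U φ₀ (n+1) 1 := by
  unfold wsum
  rw [← Equiv.sum_comp (Fin.snocEquiv (fun _ => Bool))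
    (fun ξ => Complex.normSq (weight U φ₀ ξ i)), Fintype.sum_prod_type]
  have he : ∀ (b : Bool) (ξ : Fin (n+1) → Bool),
      (Fin.snocEquiv (fun _ => Bool)) (b, ξ) = Fin.snoc ξ b := fun _ _ => rfl
  simp only [he, normSq_weight_snoc]
  rw [Fintype.sum_bool]
  have hone : ∀ i : Fin 2,
      (if i = bidx true then (1:ℝ) else 0) + (if i = bidx false then 1 else 0) = 1 := by
    intro i; fin_cases i <;> simp [bidx]
  rw [← Finset.sum_add_distrib]
  simp only [← add_mul]
  rw [Finset.sum_congr rfl (fun ξ _ => by rw [hone i, one_mul])]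
  rw [Finset.sum_add_distrib, Finset.mul_sum, Finset.mul_sum]

lemma weight_one (U : Matrix (Fin 2) (Fin 2) ℂ) (φ₀ : Fin 2 → ℂ) (ξ : Fin 1 → Bool) :
    weight U φ₀ ξ = (pMat U (ξ 0)).mulVec φ₀ := by
  unfold weight
  simp [List.ofFn_succ]

lemma wsum_one (U : Matrix (Fin 2) (Fin 2) ℂ) (φ₀ : Fin 2 → ℂ) (i : Fin 2) :
    wsum U φ₀ 1 i = Complex.normSq (U.mulVec φ₀ i) := by
  unfold wsum
  rw [← Equiv.sum_comp (Equiv.funUnique (Fin 1) Bool).symm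
    (fun ξ => Complex.normSq (weight U φ₀ ξ i))]
  rw [Fintype.sum_bool]
  have : ∀ b : Bool, ((Equiv.funUnique (Fin 1) Bool).symm b) 0 = b := fun _ => rfl
  simp only [weight_one, pMat_mulVec, this]
  fin_cases i <;> simp [bidx]

lemma wsum_closed (a b c d α β : ℂ)
    (hU : !![a, b; c, d] ∈ Matrix.unitaryGroup (Fin 2) ℂ)
    (hφ : ‖α‖ ^ 2 + ‖β‖ ^ 2 = 1)
    (p p₀ : ℝ)
    (hp : p = ‖a‖ ^ 2) (hp₀ : p₀ = ‖c * α + d * β‖ ^ 2) (n : ℕ) :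
    wsum !![a, b; c, d] ![α, β] (n+1) 0 = (1 - (2*p-1)^n * (2*p₀-1))/2 ∧
      wsum !![a, b; c, d] ![α, β] (n+1) 1 = (1 + (2*p-1)^n * (2*p₀-1))/2 := by
  have hsU : star (!![a, b; c, d]) * !![a, b; c, d] = 1 :=
    Matrix.mem_unitaryGroup_iff'.mp hU
  have hUs : !![a, b; c, d] * star (!![a, b; c, d]) = 1 :=
    Matrix.mem_unitaryGroup_iff.mp hU
  have h00 : starRingEnd ℂ a * a + starRingEnd ℂ c * c = 1 := by
    have := congrFun (congrFun hsU 0) 0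
    simpa [Matrix.mul_apply, Fin.sum_univ_two, Matrix.one_apply,
      Matrix.conjTranspose_apply] using this
  have h11 : starRingEnd ℂ b * b + starRingEnd ℂ d * d = 1 := by
    have := congrFun (congrFun hsU 1) 1
    simpa [Matrix.mul_apply, Fin.sum_univ_two, Matrix.one_apply,
      Matrix.conjTranspose_apply] using this
  have h01 : starRingEnd ℂ a * b + starRingEnd ℂ c * d = 0 := by
    have := congrFun (congrFun hsU 0) 1
    simpa [Matrix.mul_apply, Fin.sum_univ_two, Matrix.one_apply,
      Matrix.conjTranspose_apply] using this
  have h01' : a * starRingEnd ℂ b + c * starRingEnd ℂ d = 0 := by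
    have := congrArg (starRingEnd ℂ) h01
    simpa [_root_.map_add, _root_.map_mul, mul_comm] using this
  have g00 : a * starRingEnd ℂ a + b * starRingEnd ℂ b = 1 := by
    have := congrFun (congrFun hUs 0) 0
    simpa [Matrix.mul_apply, Fin.sum_univ_two, Matrix.one_apply,
      Matrix.conjTranspose_apply] using this
  -- normSq of entries
  have nsa : Complex.normSq a = p := by rw [hp, Complex.sq_norm]
  have nsc : Complex.normSq c = 1 - p := by
    have : (Complex.normSq a : ℂ) + Complex.normSq c = 1 := by
      simp only [Complex.normSq_eq_conj_mul_self]; linear_combination h00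
    have : Complex.normSq a + Complex.normSq c = 1 := by exact_mod_cast this
    linarith [nsa ▸ this]
  have nsb : Complex.normSq b = 1 - p := by
    have : (Complex.normSq a : ℂ) + Complex.normSq b = 1 := by
      rw [Complex.normSq_eq_conj_mul_self, Complex.normSq_eq_conj_mul_self]
      linear_combination g00
    have : Complex.normSq a + Complex.normSq b = 1 := by exact_mod_cast this
    linarith [nsa ▸ this]
  have nsd : Complex.normSq d = p := by
    have : (Complex.normSq b : ℂ) + Complex.normSq d = 1 := by
      simp only [Complex.normSq_eq_conj_mul_self]; linear_combination h11
    have : Complex.normSq b + Complex.normSq d = 1 := by exact_mod_cast this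
    linarith [nsb ▸ this]
  -- initial vector
  have nsp₀ : Complex.normSq (c * α + d * β) = p₀ := by rw [hp₀, Complex.sq_norm]
  have nsq₀ : Complex.normSq (a * α + b * β) = 1 - p₀ := by
    have hC : (Complex.normSq (a*α+b*β) : ℂ) + Complex.normSq (c*α+d*β)
        = Complex.normSq α + Complex.normSq β := by
      simp only [Complex.normSq_eq_conj_mul_self, _root_.map_add, _root_.map_mul]
      linear_combination (starRingEnd ℂ α * α) * h00 + (starRingEnd ℂ β * β) * h11 +
        (starRingEnd ℂ α * β) * h01 + (starRingEnd ℂ β * α) * h01'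
    have hR : Complex.normSq (a*α+b*β) + Complex.normSq (c*α+d*β)
        = Complex.normSq α + Complex.normSq β := by exact_mod_cast hC
    have hφ' : Complex.normSq α + Complex.normSq β = 1 := by
      rw [← Complex.sq_norm, ← Complex.sq_norm]; exact hφ
    rw [hφ', nsp₀] at hR
    linarith
  -- mulVec entries
  have hmv0 : (!![a, b; c, d]).mulVec ![α, β] 0 = a * α + b * β := by
    simp [Matrix.mulVec, dotProduct, Fin.sum_univ_two]
  have hmv1 : (!![a, b; c, d]).mulVec ![α, β] 1 = c * α + d * β := by
    simp [Matrix.mulVec, dotProduct, Fin.sum_univ_two]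
  -- entries of U
  have e00 : (!![a, b; c, d]) 0 0 = a := rfl
  have e01 : (!![a, b; c, d]) 0 1 = b := rfl
  have e10 : (!![a, b; c, d]) 1 0 = c := rfl
  have e11 : (!![a, b; c, d]) 1 1 = d := rfl
  induction n with
  | zero =>
    rw [wsum_one, wsum_one, hmv0, hmv1, nsq₀, nsp₀]
    constructor <;> ring
  | succ n ih =>
    obtain ⟨ih0, ih1⟩ := ih
    rw [wsum_succ, wsum_succ, ih0, ih1, e00, e01, e10, e11, nsa, nsb, nsc, nsd]
    constructor <;> ring

lemma bidx_inj {b b' : Bool} (h : bidx b = bidx b') : b = b' := by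
  cases b <;> cases b' <;> simp_all [bidx]

lemma decMat_A0_eq_mul (U : Matrix (Fin 2) (Fin 2) ℂ) (φ₀ : Fin 2 → ℂ) (n : ℕ) :
    decMat U φ₀ (A0 n) =
      (Matrix.of fun (ξ : Fin (n+1) → Bool) (i : Fin 2) =>
        starRingEnd ℂ (weight U φ₀ ξ i)) *
      (Matrix.of fun (i : Fin 2) (η : Fin (n+1) → Bool) => weight U φ₀ η i) := by
  ext ξ η
  rw [Matrix.mul_apply]
  simp only [Matrix.of_apply, decMat, A0, Set.mem_setOf_eq]
  by_cases hmem : ξ (Fin.last n) = η (Fin.last n)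
  · rw [if_pos hmem]; rfl
  · rw [if_neg hmem]
    symm
    apply Finset.sum_eq_zero
    intro i _
    by_cases hi : i = bidx (ξ (Fin.last n))
    · have : i ≠ bidx (η (Fin.last n)) := by
        intro hcon
        exact hmem (bidx_inj (hi ▸ hcon))
      rw [weight_apply_of_ne U φ₀ η i this, mul_zero]
    · rw [weight_apply_of_ne U φ₀ ξ i hi, map_zero, zero_mul]

lemma mul_decTranspose (U : Matrix (Fin 2) (Fin 2) ℂ) (φ₀ : Fin 2 → ℂ) (n : ℕ) :
    (Matrix.of fun (i : Fin 2) (η : Fin (n+1) → Bool) => weight U φ₀ η i) *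
      (Matrix.of fun (ξ : Fin (n+1) → Bool) (i : Fin 2) =>
        starRingEnd ℂ (weight U φ₀ ξ i)) =
      Matrix.diagonal (fun i => ((wsum U φ₀ (n+1) i : ℝ) : ℂ)) := by
  ext i j
  rw [Matrix.mul_apply]
  simp only [Matrix.of_apply]
  by_cases hij : i = j
  · subst hij
    rw [Matrix.diagonal_apply_eq]
    unfold wsum
    push_cast
    apply Finset.sum_congr rfl
    intro ξ _
    rw [Complex.mul_conj]
  · rw [Matrix.diagonal_apply_ne _ hij]
    apply Finset.sum_eq_zero
    intro ξ _
    by_cases hi : i = bidx (ξ (Fin.last n))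
    · have hj : j ≠ bidx (ξ (Fin.last n)) := fun hcon => hij (hi ▸ hcon.symm ▸ rfl)
      rw [weight_apply_of_ne U φ₀ ξ j hj, map_zero, mul_zero]
    · rw [weight_apply_of_ne U φ₀ ξ i hi, zero_mul]

lemma vnEntropy_decMat_eq_wsum (U : Matrix (Fin 2) (Fin 2) ℂ) (φ₀ : Fin 2 → ℂ) (n : ℕ) :
    vnEntropy (decMat U φ₀ (A0 n)) =
      -(wsum U φ₀ (n+1) 0 * Real.logb 2 (wsum U φ₀ (n+1) 0) +
        wsum U φ₀ (n+1) 1 * Real.logb 2 (wsum U φ₀ (n+1) 1)) := by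
  have hcard : Fintype.card (Fin (n+1) → Bool) = 2 ^ (n+1) := by simp
  have h2 : 2 ≤ Fintype.card (Fin (n+1) → Bool) := by
    rw [hcard]
    calc 2 = 2 ^ 1 := rfl
    _ ≤ 2 ^ (n+1) := Nat.pow_le_pow_right (by norm_num) (by omega)
  set r : Fin 2 → ℂ := fun i => ((wsum U φ₀ (n+1) i : ℝ) : ℂ) with hr
  have hdiag : (Matrix.diagonal r).charpoly =
      (Polynomial.X - Polynomial.C (r 0)) * (Polynomial.X - Polynomial.C (r 1)) := by
    rw [Matrix.charpoly_of_upperTriangular _ (Matrix.blockTriangular_diagonal r)]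
    rw [Fin.prod_univ_two, Matrix.diagonal_apply_eq, Matrix.diagonal_apply_eq]
  have hcp : (decMat U φ₀ (A0 n)).charpoly =
      Polynomial.X ^ (Fintype.card (Fin (n+1) → Bool) - 2) *
        ((Polynomial.X - Polynomial.C (r 0)) * (Polynomial.X - Polynomial.C (r 1))) := by
    rw [decMat_A0_eq_mul, my_charpoly_rect _ _ h2, mul_decTranspose, hdiag]
  unfold vnEntropy
  rw [hcp]
  have hne1 : (Polynomial.X ^ (Fintype.card (Fin (n+1) → Bool) - 2) : Polynomial ℂ) ≠ 0 :=
    (Polynomial.monic_X_pow _).ne_zero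
  have hne2 : ((Polynomial.X - Polynomial.C (r 0)) * (Polynomial.X - Polynomial.C (r 1))
      : Polynomial ℂ) ≠ 0 :=
    ((Polynomial.monic_X_sub_C _).mul (Polynomial.monic_X_sub_C _)).ne_zero
  rw [Polynomial.roots_mul (mul_ne_zero hne1 hne2), Polynomial.roots_pow, Polynomial.roots_X,
    Polynomial.roots_mul hne2, Polynomial.roots_X_sub_C, Polynomial.roots_X_sub_C]
  rw [Multiset.nsmul_singleton, Multiset.map_add, Multiset.map_replicate, Multiset.sum_add,
    Multiset.sum_replicate, Multiset.map_add, Multiset.sum_add, Multiset.map_singleton,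
    Multiset.map_singleton, Multiset.sum_singleton, Multiset.sum_singleton]
  simp [hr, Complex.ofReal_re]

/-- `S_{A₀} = −(ρ_L log₂ ρ_L + ρ_R log₂ ρ_R)` for paths of length `n+1`,
where `ρ_L = (1 + (p−q)^n(p₀−q₀))/2` and `ρ_R = (1 − (p−q)^n(p₀−q₀))/2`. -/
theorem vnEntropy_decMat_A0
    (a b c d α β : ℂ)
    (hU : !![a, b; c, d] ∈ Matrix.unitaryGroup (Fin 2) ℂ)
    (habcd : a * b * c * d ≠ 0)
    (hφ : ‖α‖ ^ 2 + ‖β‖ ^ 2 = 1)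
    (p q p₀ q₀ : ℝ)
    (hp : p = ‖a‖ ^ 2) (hq : q = 1 - p)
    (hp₀ : p₀ = ‖c * α + d * β‖ ^ 2) (hq₀ : q₀ = 1 - p₀)
    (n : ℕ) :
    vnEntropy (decMat !![a, b; c, d] ![α, β] (A0 n)) =
      -(((1 + (p - q) ^ n * (p₀ - q₀)) / 2) *
          Real.logb 2 ((1 + (p - q) ^ n * (p₀ - q₀)) / 2) +
        ((1 - (p - q) ^ n * (p₀ - q₀)) / 2) *
          Real.logb 2 ((1 - (p - q) ^ n * (p₀ - q₀)) / 2)) := by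
  have key := wsum_closed a b c d α β hU hφ p p₀ hp hp₀ n
  have h1 : (p - q) = 2*p - 1 := by rw [hq]; ring
  have h2 : (p₀ - q₀) = 2*p₀ - 1 := by rw [hq₀]; ring
  rw [vnEntropy_decMat_eq_wsum, key.1, key.2, h1, h2]
  ring
end CharpolyAux
end
end
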